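/- Let n ≥ 1 be a natural number and let x_1, …, x_n be pairwise distinct strictly positive real numbers. Let f(x) := ln(1 + x)/x for x > 0. Then ∑_{i=1}^n f(x_i) / ∏_{j=1, j≠i}^n (x_j − x_i) < 1/n. -/

import Mathlib

open Finset

theorem divided_difference_sum_lt (n : ℕ) (hn : 1 ≤ n) (x : Fin n → ℝ)
    (hx : ∀ i, 0 < x i) (hinj : Function.Injective x) :
    ∑ i, (Real.log (1 + x i) / x i) / (∏ j ∈ Finset.univ.erase i, (x j - x i)) <
      1 / n := by
  haveI : NeZero n := ⟨by omega⟩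
  set P : Fin n → ℝ := fun i => ∏ j ∈ Finset.univ.erase i, (x j - x i) with hP
  -- positivity of 1 + t * x i for t ≥ 0
  have hpos : ∀ (t : ℝ), 0 ≤ t → ∀ i, 0 < 1 + t * x i := by
    intro t ht i
    nlinarith [hx i]
  -- continuity of each inverse factor
  have hcontf : ∀ i, ContinuousOn (fun t : ℝ => (1 + t * x i)⁻¹) (Set.Icc 0 1) := by
    intro i
    exact (continuous_const.add (continuous_id.mul continuous_const)).continuousOn.inv₀
      fun t ht => (hpos t ht.1 i).ne'
  -- the integral formula for log(1+x)/x
  have hint : ∀ i, Real.log (1 + x i) / x i = ∫ t in (0:ℝ)..1, (1 + t * x i)⁻¹ := by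
    intro i
    have hxi := hx i
    have hderiv : ∀ t ∈ Set.uIcc (0:ℝ) 1,
        HasDerivAt (fun s : ℝ => Real.log (1 + s * x i) / x i) ((1 + t * x i)⁻¹) t := by
      intro t ht
      rw [Set.uIcc_of_le zero_le_one] at ht
      have h1 : (0:ℝ) < 1 + t * x i := hpos t ht.1 i
      have hd : HasDerivAt (fun s : ℝ => 1 + s * x i) (x i) t := by
        simpa using (hasDerivAt_mul_const (x i)).const_add 1
      have hlog := (hd.log h1.ne').div_const (x i)
      convert hlog using 1
      · rfl
      · rfl
      field_simp
    rw [intervalIntegral.integral_eq_sub_of_hasDerivAt hderiv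
      ((hcontf i).intervalIntegrable_of_Icc zero_le_one)]
    norm_num
  -- the Lagrange interpolation identity
  have key : ∀ t : ℝ, 0 < t →
      ∑ i, (P i)⁻¹ * ∏ j ∈ Finset.univ.erase i, (1 + t * x j) = t ^ (n - 1) := by
    intro t ht
    have hv : Function.Injective (fun i => t * x i) := fun a b h =>
      hinj (mul_left_cancel₀ ht.ne' h)
    have hsum := Lagrange.sum_basis (Set.injOn_of_injective hv) (Finset.univ_nonempty)
    have heval := congrArg (Polynomial.eval (-1 : ℝ)) hsum
    simp only [Polynomial.eval_finset_sum, Polynomial.eval_one, Lagrange.basis,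
      Polynomial.eval_prod, Lagrange.basisDivisor, Polynomial.eval_mul, Polynomial.eval_C,
      Polynomial.eval_sub, Polynomial.eval_X] at heval
    have hterm : ∀ i : Fin n,
        (∏ j ∈ Finset.univ.erase i, (t * x i - t * x j)⁻¹ * (-1 - t * x j))
          = (t ^ (n - 1))⁻¹ * ((P i)⁻¹ * ∏ j ∈ Finset.univ.erase i, (1 + t * x j)) := by
      intro i
      have : ∀ j : Fin n, (t * x i - t * x j)⁻¹ * (-1 - t * x j)
          = t⁻¹ * ((x j - x i)⁻¹ * (1 + t * x j)) := by
        intro j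
        rcases eq_or_ne (x i) (x j) with h | h
        · simp [h]
        · rw [show t * x i - t * x j = t * (x i - x j) by ring, mul_inv,
            show (-1 : ℝ) - t * x j = -(1 + t * x j) by ring]
          rw [show (x i - x j)⁻¹ = -(x j - x i)⁻¹ by rw [← neg_sub (x j), inv_neg]]
          ring
      rw [Finset.prod_congr rfl fun j _ => this j, Finset.prod_mul_distrib,
        Finset.prod_const, Finset.prod_mul_distrib, ← Finset.prod_inv_distrib,
        Finset.card_erase_of_mem (Finset.mem_univ i), Finset.card_univ, Fintype.card_fin,
        ← inv_pow]
    rw [Finset.sum_congr rfl fun i _ => hterm i, ← Finset.mul_sum] at heval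
    have htpow : (0:ℝ) < t ^ (n - 1) := pow_pos ht _
    rwa [inv_mul_eq_one₀ htpow.ne', eq_comm] at heval
  -- pointwise value of the sum function
  have hgt : ∀ t : ℝ, 0 < t →
      ∑ i, (P i)⁻¹ * (1 + t * x i)⁻¹ = t ^ (n - 1) / ∏ j, (1 + t * x j) := by
    intro t ht
    have h1 : ∀ i : Fin n, 0 < 1 + t * x i := hpos t ht.le
    have hprodpos : 0 < ∏ j, (1 + t * x j) := Finset.prod_pos fun j _ => h1 j
    rw [eq_div_iff hprodpos.ne', Finset.sum_mul]
    rw [← key t ht]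
    refine Finset.sum_congr rfl fun i _ => ?_
    rw [mul_assoc, ← Finset.mul_prod_erase _ _ (Finset.mem_univ i),
      inv_mul_cancel_left₀ (h1 i).ne']
  -- rewrite the goal as an integral
  have hrw : ∑ i, (Real.log (1 + x i) / x i) / P i
      = ∫ t in (0:ℝ)..1, ∑ i, (P i)⁻¹ * (1 + t * x i)⁻¹ := by
    rw [intervalIntegral.integral_finset_sum (f := fun i t => (P i)⁻¹ * (1 + t * x i)⁻¹)
      (fun i _ => ((continuousOn_const.mul (hcontf i)).intervalIntegrable_of_Icc zero_le_one))]
    refine Finset.sum_congr rfl fun i _ => ?_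
    rw [div_eq_mul_inv, mul_comm, hint i, ← intervalIntegral.integral_const_mul]
  rw [hrw]
  -- strict integral comparison
  have hfinal : (∫ t in (0:ℝ)..1, ∑ i, (P i)⁻¹ * (1 + t * x i)⁻¹)
      < ∫ t in (0:ℝ)..1, t ^ (n - 1) := by
    apply intervalIntegral.integral_lt_integral_of_continuousOn_of_le_of_exists_lt zero_lt_one
    · exact continuousOn_finset_sum _ fun i _ => continuousOn_const.mul (hcontf i)
    · exact (continuous_pow _).continuousOn
    · intro t ht
      rw [hgt t ht.1]
      have h1 : ∀ i : Fin n, 0 < 1 + t * x i := hpos t ht.1.le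
      have hge1 : (1:ℝ) ≤ ∏ j, (1 + t * x j) := by
        have := Finset.prod_le_prod (s := Finset.univ) (f := fun _ : Fin n => (1:ℝ))
          (g := fun j => 1 + t * x j) (fun j _ => zero_le_one)
          (fun j _ => by nlinarith [hx j, ht.1])
        simpa using this
      exact div_le_self (pow_nonneg ht.1.le _) hge1
    · refine ⟨1, Set.right_mem_Icc.2 zero_le_one, ?_⟩
      rw [hgt 1 zero_lt_one, one_pow]
      have h2 : (1:ℝ) < ∏ j, (1 + 1 * x j) := by
        have := Finset.prod_lt_prod_of_nonempty (s := Finset.univ)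
          (f := fun _ : Fin n => (1:ℝ)) (g := fun j => 1 + 1 * x j)
          (fun j _ => zero_lt_one) (fun j _ => by nlinarith [hx j]) Finset.univ_nonempty
        simpa using this
      rw [div_lt_one (lt_trans zero_lt_one h2)]
      exact h2
  have hval : (∫ t in (0:ℝ)..1, t ^ (n - 1)) = 1 / n := by
    rw [integral_pow, one_pow, zero_pow (by omega : n - 1 + 1 ≠ 0)]
    rw [show ((n - 1 : ℕ) : ℝ) + 1 = n by rw [Nat.cast_sub hn]; push_cast; ring]
    norm_num
  exact hval ▸ hfinal
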